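/- Let A and B be bounded, self-adjoint, positive linear operators on a complex Hilbert space H such that ‖B h‖ ≤ ‖A h‖ for all h ∈ H. Then for every ν ∈ [0, 1] and every h ∈ H, ‖B^ν h‖ ≤ ‖A^ν h‖, where the fractional powers A^ν and B^ν are defined via the continuous functional calculus. -/

import Mathlib

/-- Fractional power `A^r` (for `r : ℝ`) of a bounded operator, via the continuous
functional calculus for self-adjoint operators (real power `x ↦ x ^ r`). -/
noncomputable def opPow {H : Type*} [NormedAddCommGroup H] [InnerProductSpace ℂ H]
    [CompleteSpace H] (A : H →L[ℂ] H) (r : ℝ) : H →L[ℂ] H :=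
  cfc (fun x : ℝ => x ^ r) A

section HeinzDevelopment

open MeasureTheory Set

lemma measurable_aux (ν : ℝ) : Measurable (fun t : ℝ => t ^ (ν - 1) / (1 + t)) := by
  fun_prop

lemma heinz_integrableOn {ν : ℝ} (hν : ν ∈ Ioo (0:ℝ) 1) :
    IntegrableOn (fun t : ℝ => t ^ (ν - 1) / (1 + t)) (Ioi 0) := by
  obtain ⟨hν0, hν1⟩ := hν
  have h01 : IntegrableOn (fun t : ℝ => t ^ (ν - 1) / (1 + t)) (Ioc 0 1) := by
    have hmaj : IntegrableOn (fun t : ℝ => t ^ (ν - 1)) (Ioc 0 1) := by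
      have := intervalIntegral.intervalIntegrable_rpow' (a := 0) (b := 1) (r := ν - 1)
        (by linarith)
      rwa [intervalIntegrable_iff_integrableOn_Ioc_of_le (by norm_num)] at this
    refine hmaj.mono' ((measurable_aux ν).aestronglyMeasurable) ?_
    filter_upwards [ae_restrict_mem measurableSet_Ioc] with t ht
    have ht0 : 0 < t := ht.1
    rw [Real.norm_eq_abs, abs_div, abs_of_nonneg (Real.rpow_nonneg ht0.le _),
      abs_of_pos (by linarith : (0:ℝ) < 1 + t)]
    rw [div_le_iff₀ (by linarith)]
    nlinarith [Real.rpow_nonneg ht0.le (ν - 1)]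
  have h1i : IntegrableOn (fun t : ℝ => t ^ (ν - 1) / (1 + t)) (Ioi 1) := by
    have hmaj : IntegrableOn (fun t : ℝ => t ^ (ν - 2)) (Ioi 1) :=
      integrableOn_Ioi_rpow_of_lt (by linarith) one_pos
    refine hmaj.mono' ((measurable_aux ν).aestronglyMeasurable) ?_
    filter_upwards [ae_restrict_mem measurableSet_Ioi] with t ht
    have ht1 : (1:ℝ) < t := ht
    have ht0 : 0 < t := by linarith
    rw [Real.norm_eq_abs, abs_div, abs_of_nonneg (Real.rpow_nonneg ht0.le _),
      abs_of_pos (by linarith : (0:ℝ) < 1 + t)]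
    rw [div_le_iff₀ (by linarith)]
    calc t ^ (ν - 1) = t ^ (ν - 2) * t := by
          rw [← Real.rpow_add_one ht0.ne']; ring_nf
      _ ≤ t ^ (ν - 2) * (1 + t) := by
          have := Real.rpow_nonneg ht0.le (ν - 2); nlinarith
  rw [← Ioc_union_Ioi_eq_Ioi (by norm_num : (0:ℝ) ≤ 1)]
  exact h01.union h1i

noncomputable def heinzI (ν : ℝ) : ℝ := ∫ t in Ioi (0:ℝ), t ^ (ν - 1) / (1 + t)

lemma heinzI_pos {ν : ℝ} (hν : ν ∈ Ioo (0:ℝ) 1) : 0 < heinzI ν := by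
  have h1 : 0 ≤ᵐ[volume.restrict (Ioi (0:ℝ))] fun t : ℝ => t ^ (ν - 1) / (1 + t) := by
    filter_upwards [ae_restrict_mem measurableSet_Ioi] with t ht
    have ht0 : (0:ℝ) < t := ht
    positivity
  rw [heinzI, setIntegral_pos_iff_support_of_nonneg_ae h1 (heinz_integrableOn hν)]
  have hsub : Ioi (0:ℝ) ⊆ Function.support (fun t : ℝ => t ^ (ν - 1) / (1 + t)) ∩ Ioi 0 := by
    intro t ht
    have ht0 : (0:ℝ) < t := ht
    refine ⟨?_, ht⟩
    simp only [Function.mem_support]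
    positivity
  calc (0:ENNReal) < volume (Ioi (0:ℝ)) := by simp
    _ ≤ _ := measure_mono hsub

lemma heinz_scalar_rep {ν : ℝ} (hν : ν ∈ Ioo (0:ℝ) 1) {x : ℝ} (hx : 0 ≤ x) :
    ∫ t in Ioi (0:ℝ), t ^ (ν - 1) * (x / (x + t)) = heinzI ν * x ^ ν := by
  rcases eq_or_lt_of_le hx with rfl|hx
  · rw [Real.zero_rpow hν.1.ne', mul_zero]
    rw [setIntegral_congr_fun measurableSet_Ioi (g := fun _ => (0:ℝ))]
    · simp
    · intro t ht
      simp [zero_div]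
  · -- substitution t = x * s
    have key := integral_comp_mul_left_Ioi (fun t : ℝ => t ^ (ν - 1) * (x / (x + t))) 0 hx
    rw [mul_zero] at key
    have h2 : ∀ s ∈ Ioi (0:ℝ), (x*s) ^ (ν - 1) * (x / (x + x*s))
        = x ^ (ν - 1) * (s ^ (ν - 1) / (1 + s)) := by
      intro s hs
      have hs0 : (0:ℝ) < s := hs
      have h1s : (0:ℝ) < 1 + s := by linarith
      rw [Real.mul_rpow hx.le hs0.le]
      rw [show x + x*s = x * (1+s) by ring]
      rw [div_mul_eq_div_div_swap, div_right_comm, div_self hx.ne']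
      ring
    beta_reduce at key
    rw [setIntegral_congr_fun measurableSet_Ioi h2, integral_const_mul, smul_eq_mul] at key
    have hxν : x ^ ν = x * x ^ (ν - 1) := by
      rw [Real.rpow_sub hx, Real.rpow_one]; field_simp
    rw [heinzI, hxν]
    linear_combination (-x) * key
      + (-(∫ t in Ioi (0:ℝ), t ^ (ν - 1) * (x / (x + t)))) * (mul_inv_cancel₀ hx.ne')
set_option synthInstance.maxHeartbeats 200000

section op
variable {H : Type*} [NormedAddCommGroup H] [InnerProductSpace ℂ H] [CompleteSpace H]

namespace HeinzAux

lemma spec_nonneg {a : H →L[ℂ] H} (ha : 0 ≤ a) {x : ℝ} (hx : x ∈ spectrum ℝ a) : 0 ≤ x :=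
  spectrum_nonneg_of_nonneg ha hx

lemma smul_nonneg' {w : H →L[ℂ] H} (hw : 0 ≤ w) {t : ℝ} (ht : 0 ≤ t) : 0 ≤ t • w := by
  have hsa : IsSelfAdjoint w := .of_nonneg hw
  rw [← cfc_const_mul_id t w hsa]
  exact cfc_nonneg fun x hx => mul_nonneg ht (spec_nonneg hw hx)

lemma smul_le_smul' {v w : H →L[ℂ] H} (hvw : v ≤ w) {t : ℝ} (ht : 0 ≤ t) : t • v ≤ t • w := by
  rw [← sub_nonneg, ← smul_sub]
  exact smul_nonneg' (sub_nonneg.2 hvw) ht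

lemma algebraMap_nonneg' {t : ℝ} (ht : 0 ≤ t) : 0 ≤ algebraMap ℝ (H →L[ℂ] H) t := by
  rw [← cfc_const t (0 : H →L[ℂ] H) (IsSelfAdjoint.zero _)]
  exact cfc_nonneg fun x _ => ht

lemma contOn_inv {a : H →L[ℂ] H} (ha : 0 ≤ a) {t : ℝ} (ht : 0 < t) :
    ContinuousOn (fun x : ℝ => (x + t)⁻¹) (spectrum ℝ a) := by
  apply ContinuousOn.inv₀ (by fun_prop)
  intro x hx; have := spec_nonneg ha hx; positivity

noncomputable def resolvent (a : H →L[ℂ] H) (t : ℝ) : H →L[ℂ] H :=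
  cfc (fun x : ℝ => (x + t)⁻¹) a

lemma resolvent_nonneg {a : H →L[ℂ] H} (ha : 0 ≤ a) {t : ℝ} (ht : 0 < t) :
    0 ≤ resolvent a t :=
  cfc_nonneg fun x hx => by have := spec_nonneg ha hx; positivity

lemma shift_eq {a : H →L[ℂ] H} (ha : 0 ≤ a) (t : ℝ) :
    cfc (fun x : ℝ => x + t) a = a + algebraMap ℝ (H →L[ℂ] H) t := by
  have hsa : IsSelfAdjoint a := .of_nonneg ha
  rw [cfc_add_const t _ a (by fun_prop), cfc_id' ℝ a]

lemma mul_resolvent {a : H →L[ℂ] H} (ha : 0 ≤ a) {t : ℝ} (ht : 0 < t) :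
    (a + algebraMap ℝ (H →L[ℂ] H) t) * resolvent a t = 1 := by
  have hsa : IsSelfAdjoint a := .of_nonneg ha
  rw [← shift_eq ha t, resolvent, ← cfc_mul _ _ a (by fun_prop) (contOn_inv ha ht)]
  have : cfc (fun x : ℝ => (x + t) * (x + t)⁻¹) a = cfc (fun _ : ℝ => (1:ℝ)) a := by
    apply cfc_congr
    intro x hx
    have hx0 := spec_nonneg ha hx
    have : x + t ≠ 0 := by positivity
    field_simp
  rw [this, cfc_const 1 a, map_one]

lemma resolvent_mul {a : H →L[ℂ] H} (ha : 0 ≤ a) {t : ℝ} (ht : 0 < t) :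
    resolvent a t * (a + algebraMap ℝ (H →L[ℂ] H) t) = 1 := by
  have hsa : IsSelfAdjoint a := .of_nonneg ha
  rw [← shift_eq ha t, resolvent, ← cfc_mul _ _ a (contOn_inv ha ht) (by fun_prop)]
  have : cfc (fun x : ℝ => (x + t)⁻¹ * (x + t)) a = cfc (fun _ : ℝ => (1:ℝ)) a := by
    apply cfc_congr
    intro x hx
    have hx0 := spec_nonneg ha hx
    have : x + t ≠ 0 := by positivity
    field_simp
  rw [this, cfc_const 1 a, map_one]

noncomputable def shiftUnit {a : H →L[ℂ] H} (ha : 0 ≤ a) {t : ℝ} (ht : 0 < t) : (H →L[ℂ] H)ˣ :=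
  ⟨a + algebraMap ℝ (H →L[ℂ] H) t, resolvent a t, mul_resolvent ha ht, resolvent_mul ha ht⟩

lemma shiftUnit_coe {a : H →L[ℂ] H} (ha : 0 ≤ a) {t : ℝ} (ht : 0 < t) :
    (shiftUnit ha ht : H →L[ℂ] H) = a + algebraMap ℝ (H →L[ℂ] H) t := rfl

lemma shiftUnit_inv_coe {a : H →L[ℂ] H} (ha : 0 ≤ a) {t : ℝ} (ht : 0 < t) :
    (((shiftUnit ha ht)⁻¹ : (H →L[ℂ] H)ˣ) : H →L[ℂ] H) = resolvent a t := rfl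

lemma resolvent_le {a b : H →L[ℂ] H} (ha : 0 ≤ a) (hab : a ≤ b) {t : ℝ} (ht : 0 < t) :
    resolvent b t ≤ resolvent a t := by
  have hb : 0 ≤ b := ha.trans hab
  have h1 : 0 ≤ (shiftUnit ha ht : H →L[ℂ] H) := by
    rw [shiftUnit_coe]
    exact add_nonneg ha (algebraMap_nonneg' ht.le)
  have h2 : (shiftUnit ha ht : H →L[ℂ] H) ≤ (shiftUnit hb ht : H →L[ℂ] H) := by
    rw [shiftUnit_coe, shiftUnit_coe]
    exact add_le_add_left hab _
  have h3 := CStarAlgebra.inv_le_inv h1 h2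
  rwa [shiftUnit_inv_coe, shiftUnit_inv_coe] at h3

lemma cfc_div_eq {a : H →L[ℂ] H} (ha : 0 ≤ a) {t : ℝ} (ht : 0 < t) :
    cfc (fun x : ℝ => x / (x + t)) a = 1 - t • resolvent a t := by
  have hsa : IsSelfAdjoint a := .of_nonneg ha
  have h1 : cfc (fun x : ℝ => x / (x + t)) a = cfc (fun x : ℝ => 1 - t * (x + t)⁻¹) a := by
    apply cfc_congr
    intro x hx
    have hx0 := spec_nonneg ha hx
    have hxt : x + t ≠ 0 := by positivity
    field_simp
    ring
  rw [h1, cfc_sub (fun _ : ℝ => (1:ℝ)) (fun x : ℝ => t * (x + t)⁻¹) a (by fun_prop) (continuousOn_const.mul (contOn_inv ha ht)),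
    cfc_const 1 a, map_one, cfc_const_mul t _ a (contOn_inv ha ht)]
  rfl

lemma gfun_mono {a b : H →L[ℂ] H} (ha : 0 ≤ a) (hab : a ≤ b) {t : ℝ} (ht : 0 < t) :
    cfc (fun x : ℝ => x / (x + t)) a ≤ cfc (fun x : ℝ => x / (x + t)) b := by
  have hb : 0 ≤ b := ha.trans hab
  rw [cfc_div_eq ha ht, cfc_div_eq hb ht]
  exact sub_le_sub_left (smul_le_smul' (resolvent_le ha hab ht) ht.le) 1




attribute [local instance] MeasureTheory.Measure.Subtype.measureSpace

lemma bound_integrable' {ν : ℝ} (hν : ν ∈ Ioo (0:ℝ) 1) {R : ℝ} (hR : 0 ≤ R) :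
    IntegrableOn (fun t : ℝ => t ^ (ν - 1) * min 1 (R / t)) (Ioi 0) := by
  obtain ⟨hν0, hν1⟩ := hν
  have hmeas : Measurable (fun t : ℝ => t ^ (ν - 1) * min 1 (R / t)) := by fun_prop
  have h01 : IntegrableOn (fun t : ℝ => t ^ (ν - 1) * min 1 (R / t)) (Ioc 0 1) := by
    have hmaj : IntegrableOn (fun t : ℝ => t ^ (ν - 1)) (Ioc 0 1) := by
      have := intervalIntegral.intervalIntegrable_rpow' (a := 0) (b := 1) (r := ν - 1)
        (by linarith)
      rwa [intervalIntegrable_iff_integrableOn_Ioc_of_le (by norm_num)] at this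
    refine hmaj.mono' hmeas.aestronglyMeasurable ?_
    filter_upwards [ae_restrict_mem measurableSet_Ioc] with t ht
    have ht0 : 0 < t := ht.1
    have h1 : (0:ℝ) ≤ min 1 (R / t) := le_min zero_le_one (by positivity)
    rw [Real.norm_eq_abs, abs_mul, abs_of_nonneg (Real.rpow_nonneg ht0.le _), abs_of_nonneg h1]
    nlinarith [Real.rpow_nonneg ht0.le (ν - 1), min_le_left (1:ℝ) (R / t)]
  have h1i : IntegrableOn (fun t : ℝ => t ^ (ν - 1) * min 1 (R / t)) (Ioi 1) := by
    have hmaj : IntegrableOn (fun t : ℝ => R * t ^ (ν - 2)) (Ioi 1) :=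
      (integrableOn_Ioi_rpow_of_lt (by linarith) one_pos).const_mul R
    refine hmaj.mono' hmeas.aestronglyMeasurable ?_
    filter_upwards [ae_restrict_mem measurableSet_Ioi] with t ht
    have ht1 : (1:ℝ) < t := ht
    have ht0 : 0 < t := by linarith
    have h1 : (0:ℝ) ≤ min 1 (R / t) := le_min zero_le_one (by positivity)
    rw [Real.norm_eq_abs, abs_mul, abs_of_nonneg (Real.rpow_nonneg ht0.le _), abs_of_nonneg h1]
    calc t ^ (ν - 1) * min 1 (R / t) ≤ t ^ (ν - 1) * (R / t) :=
          mul_le_mul_of_nonneg_left (min_le_right _ _) (Real.rpow_nonneg ht0.le _)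
      _ = R * t ^ (ν - 2) := by
          rw [show ν - 1 = (ν - 2) + 1 by ring, Real.rpow_add_one ht0.ne']
          field_simp
  rw [← Ioc_union_Ioi_eq_Ioi (by norm_num : (0:ℝ) ≤ 1)]
  exact h01.union h1i

lemma bound_integrable {ν : ℝ} (hν : ν ∈ Ioo (0:ℝ) 1) {R : ℝ} (hR : 0 ≤ R) :
    Integrable (fun t : (Ioi (0:ℝ)) => (t:ℝ) ^ (ν - 1) * min 1 (R / (t:ℝ)))
      (volume : Measure (Ioi (0:ℝ))) := by
  have h1 := bound_integrable' hν hR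
  rw [IntegrableOn, ← map_comap_subtype_coe measurableSet_Ioi] at h1
  exact (MeasurableEmbedding.subtype_coe measurableSet_Ioi).integrable_map_iff.mp h1

variable [Nontrivial H]

lemma op_rep {a : H →L[ℂ] H} (ha : 0 ≤ a) {ν : ℝ} (hν : ν ∈ Ioo (0:ℝ) 1) :
    heinzI ν • cfc (fun x : ℝ => x ^ ν) a
      = ∫ t : (Ioi (0:ℝ)), cfc (fun x : ℝ => (t:ℝ) ^ (ν - 1) * (x / (x + (t:ℝ)))) a := by
  have hsa : IsSelfAdjoint a := .of_nonneg ha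
  have hspec : ∀ x ∈ spectrum ℝ a, 0 ≤ x := fun x hx => spec_nonneg ha hx
  have hspec2 : ∀ x ∈ spectrum ℝ a, x ≤ ‖a‖ := fun x hx =>
    (le_abs_self x).trans (spectrum.norm_le_norm_of_mem hx)
  have hrpow : ContinuousOn (fun x : ℝ => x ^ ν) (spectrum ℝ a) := fun x _ =>
    ((Real.continuousAt_rpow_const x ν (Or.inr hν.1.le)).continuousWithinAt)
  have key := cfc_integral (μ := (volume : Measure (Ioi (0:ℝ))))
      (f := fun (t : (Ioi (0:ℝ))) (x : ℝ) => (t:ℝ) ^ (ν - 1) * (x / (x + (t:ℝ))))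
      (bound := fun t : (Ioi (0:ℝ)) => (t:ℝ) ^ (ν - 1) * min 1 (‖a‖ / (t:ℝ)))
      a ?hf ?hbound ?hfin hsa
  case hf =>
    intro p hp
    have h1 : (0:ℝ) < p.1 := p.1.2
    have h2 : (0:ℝ) ≤ p.2 := hspec _ hp.2
    apply ContinuousAt.continuousWithinAt
    show ContinuousAt (fun q : (Ioi (0:ℝ)) × ℝ => (q.1:ℝ) ^ (ν - 1) * (q.2 / (q.2 + (q.1:ℝ)))) p
    have hc1 : Continuous (fun q : (Ioi (0:ℝ)) × ℝ => (q.1 : ℝ)) :=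
      continuous_subtype_val.comp continuous_fst
    have hc2 : Continuous (fun q : (Ioi (0:ℝ)) × ℝ => q.2) := continuous_snd
    refine ContinuousAt.mul ?_ ?_
    · exact (hc1.rpow_const fun q => Or.inl (ne_of_gt q.1.2)).continuousAt
    · exact hc2.continuousAt.div (hc2.add hc1).continuousAt (by positivity)
  case hbound =>
    refine Filter.Eventually.of_forall ?_
    rintro t x hx
    have ht : (0:ℝ) < t := t.2
    have hx0 : 0 ≤ x := hspec x hx
    have hxa : x ≤ ‖a‖ := hspec2 x hx
    have hxt : (0:ℝ) < x + t := by linarith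
    have hmin : (0:ℝ) ≤ min 1 (‖a‖ / (t:ℝ)) := le_min zero_le_one (by positivity)
    rw [Real.norm_eq_abs, abs_mul,
      abs_of_nonneg (Real.rpow_nonneg ht.le _),
      abs_of_nonneg (by positivity : (0:ℝ) ≤ x / (x + (t:ℝ)))]
    refine mul_le_mul_of_nonneg_left (le_min ?_ ?_) (Real.rpow_nonneg ht.le _)
    · rw [div_le_one hxt]; linarith
    · calc x / (x + (t:ℝ)) ≤ x / t := by gcongr; linarith
        _ ≤ ‖a‖ / t := by gcongr
  case hfin =>
    exact (bound_integrable hν (norm_nonneg a)).hasFiniteIntegral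
  have hL : cfc (fun r : ℝ => ∫ t : (Ioi (0:ℝ)), (t:ℝ) ^ (ν - 1) * (r / (r + (t:ℝ)))) a
      = cfc (fun x : ℝ => heinzI ν * x ^ ν) a := by
    apply cfc_congr
    intro x hx
    beta_reduce
    calc (∫ t : (Ioi (0:ℝ)), (t:ℝ) ^ (ν - 1) * (x / (x + (t:ℝ))))
        = ∫ t in Ioi (0:ℝ), t ^ (ν - 1) * (x / (x + t)) :=
          integral_subtype measurableSet_Ioi (fun s : ℝ => s ^ (ν - 1) * (x / (x + s)))
      _ = heinzI ν * x ^ ν := heinz_scalar_rep hν (hspec x hx)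
  rw [hL] at key
  rw [cfc_const_mul (heinzI ν) _ a hrpow] at key
  exact key

lemma contOn_g {a : H →L[ℂ] H} (ha : 0 ≤ a) {t : ℝ} (ht : 0 < t) :
    ContinuousOn (fun x : ℝ => x / (x + t)) (spectrum ℝ a) := by
  apply ContinuousOn.div continuousOn_id (by fun_prop)
  intro x hx
  have := spec_nonneg ha hx
  positivity

lemma integrand_eq {a : H →L[ℂ] H} (ha : 0 ≤ a) {t : ℝ} (ht : 0 < t) (c : ℝ) :
    cfc (fun x : ℝ => c * (x / (x + t))) a = c • cfc (fun x : ℝ => x / (x + t)) a := by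
  have hsa : IsSelfAdjoint a := .of_nonneg ha
  exact cfc_const_mul c _ a (contOn_g ha ht)

lemma integrand_mono {a b : H →L[ℂ] H} (ha : 0 ≤ a) (hab : a ≤ b) {t : ℝ} (ht : 0 < t)
    {c : ℝ} (hc : 0 ≤ c) :
    cfc (fun x : ℝ => c * (x / (x + t))) a ≤ cfc (fun x : ℝ => c * (x / (x + t))) b := by
  rw [integrand_eq ha ht c, integrand_eq (ha.trans hab) ht c]
  exact smul_le_smul' (gfun_mono ha hab ht) hc

lemma integrand_integrable {a : H →L[ℂ] H} (ha : 0 ≤ a) {ν : ℝ}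
    (hν : ν ∈ Ioo (0:ℝ) 1) :
    Integrable (fun t : (Ioi (0:ℝ)) =>
      cfc (fun x : ℝ => (t:ℝ) ^ (ν - 1) * (x / (x + (t:ℝ)))) a)
      (volume : Measure (Ioi (0:ℝ))) := by
  have hsa : IsSelfAdjoint a := .of_nonneg ha
  have hspec : ∀ x ∈ spectrum ℝ a, 0 ≤ x := fun x hx => spec_nonneg ha hx
  have hspec2 : ∀ x ∈ spectrum ℝ a, x ≤ ‖a‖ := fun x hx =>
    (le_abs_self x).trans (spectrum.norm_le_norm_of_mem hx)
  have hcont : Continuous (fun p : (Ioi (0:ℝ)) × (spectrum ℝ a) =>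
      ((p.1:ℝ) ^ (ν - 1) * ((p.2:ℝ) / ((p.2:ℝ) + (p.1:ℝ))))) := by
    have hcfst : Continuous (fun p : (Ioi (0:ℝ)) × (spectrum ℝ a) => (p.1 : ℝ)) :=
      continuous_subtype_val.comp continuous_fst
    have hcsnd : Continuous (fun p : (Ioi (0:ℝ)) × (spectrum ℝ a) => (p.2 : ℝ)) :=
      continuous_subtype_val.comp continuous_snd
    refine Continuous.mul (hcfst.rpow_const fun p => Or.inl (ne_of_gt p.1.2)) ?_
    refine hcsnd.div (hcsnd.add hcfst) fun p => ?_
    have h1 : (0:ℝ) < p.1 := p.1.2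
    have h2 : (0:ℝ) ≤ p.2 := hspec _ p.2.2
    positivity
  let fc : (Ioi (0:ℝ)) → C(spectrum ℝ a, ℝ) :=
    fun t => (ContinuousMap.curry ⟨_, hcont⟩) t
  have hfc : Continuous fc := (ContinuousMap.curry ⟨_, hcont⟩).continuous
  have heq : (fun t : (Ioi (0:ℝ)) =>
      cfc (fun x : ℝ => (t:ℝ) ^ (ν - 1) * (x / (x + (t:ℝ)))) a)
      = fun t => cfcL (a := a) hsa (fc t) := by
    funext t
    have ht : (0:ℝ) < t := t.2
    rw [cfc_apply (fun x : ℝ => (t:ℝ) ^ (ν - 1) * (x / (x + (t:ℝ)))) a hsa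
      (continuousOn_const.mul (contOn_g ha ht))]
    rfl
  rw [heq]
  refine (bound_integrable hν (norm_nonneg a)).mono'
    (((cfcL (a := a) hsa).continuous.comp hfc).aestronglyMeasurable) ?_
  refine Filter.Eventually.of_forall fun t => ?_
  have ht : (0:ℝ) < t := t.2
  have hmin : (0:ℝ) ≤ min 1 (‖a‖ / (t:ℝ)) := le_min zero_le_one (by positivity)
  have hb : ∀ x ∈ spectrum ℝ a,
      ‖(t:ℝ) ^ (ν - 1) * (x / (x + (t:ℝ)))‖ ≤ (t:ℝ) ^ (ν - 1) * min 1 (‖a‖ / (t:ℝ)) := by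
    intro x hx
    have hx0 : 0 ≤ x := hspec x hx
    have hxa : x ≤ ‖a‖ := hspec2 x hx
    have hxt : (0:ℝ) < x + t := by linarith
    rw [Real.norm_eq_abs, abs_mul, abs_of_nonneg (Real.rpow_nonneg ht.le _),
      abs_of_nonneg (by positivity : (0:ℝ) ≤ x / (x + (t:ℝ)))]
    refine mul_le_mul_of_nonneg_left (le_min ?_ ?_) (Real.rpow_nonneg ht.le _)
    · rw [div_le_one hxt]; linarith
    · calc x / (x + (t:ℝ)) ≤ x / t := by gcongr; linarith
        _ ≤ ‖a‖ / t := by gcongr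
  have hnorm : ‖cfcL (a := a) hsa (fc t)‖
      = ‖cfc (fun x : ℝ => (t:ℝ) ^ (ν - 1) * (x / (x + (t:ℝ)))) a‖ := by
    rw [cfc_apply (fun x : ℝ => (t:ℝ) ^ (ν - 1) * (x / (x + (t:ℝ)))) a hsa
      (continuousOn_const.mul (contOn_g ha ht))]
    rfl
  rw [hnorm]
  exact norm_cfc_le (mul_nonneg (Real.rpow_nonneg ht.le _) hmin) hb

/-- The functional `T ↦ re ⟪T v, v⟫` as a real continuous linear map. -/
noncomputable def phi (v : H) : (H →L[ℂ] H) →L[ℝ] ℝ :=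
  LinearMap.mkContinuous
    { toFun := fun T : H →L[ℂ] H => RCLike.re (inner ℂ (T v) v : ℂ)
      map_add' := fun T S => by
        simp [ContinuousLinearMap.add_apply, inner_add_left]
      map_smul' := fun c T => by
        simp only [ContinuousLinearMap.coe_smul', Pi.smul_apply, RingHom.id_apply, smul_eq_mul]
        rw [RCLike.real_smul_eq_coe_smul (K := ℂ), inner_smul_left]
        simp [RCLike.conj_ofReal] }
    (‖v‖ * ‖v‖)
    (fun T => by
      simp only [LinearMap.coe_mk, AddHom.coe_mk]
      calc ‖RCLike.re (inner ℂ (T v) v : ℂ)‖ ≤ ‖(inner ℂ (T v) v : ℂ)‖ := by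
            exact RCLike.norm_re_le_norm _
        _ ≤ ‖T v‖ * ‖v‖ := norm_inner_le_norm _ _
        _ ≤ ‖T‖ * ‖v‖ * ‖v‖ :=
            mul_le_mul_of_nonneg_right (T.le_opNorm v) (norm_nonneg v)
        _ = ‖v‖ * ‖v‖ * ‖T‖ := by ring)

lemma phi_apply (v : H) (T : H →L[ℂ] H) : phi v T = RCLike.re (inner ℂ (T v) v : ℂ) := rfl

lemma phi_mono {T S : H →L[ℂ] H} (hTS : T ≤ S) (v : H) : phi v T ≤ phi v S := by
  rw [ContinuousLinearMap.le_def] at hTS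
  have := hTS.re_inner_nonneg_left v
  rw [ContinuousLinearMap.sub_apply, inner_sub_left, map_sub] at this
  rw [phi_apply, phi_apply]
  linarith

lemma le_of_phi_le {T S : H →L[ℂ] H} (hT : IsSelfAdjoint T) (hS : IsSelfAdjoint S)
    (h : ∀ v, phi v T ≤ phi v S) : T ≤ S := by
  rw [ContinuousLinearMap.le_def]
  refine ⟨ContinuousLinearMap.isSelfAdjoint_iff_isSymmetric.mp (hS.sub hT), fun v => ?_⟩
  have := h v
  rw [phi_apply, phi_apply] at this
  rw [ContinuousLinearMap.reApplyInnerSelf, ContinuousLinearMap.sub_apply, inner_sub_left,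
    map_sub]
  linarith

theorem heinz_core {a b : H →L[ℂ] H} (ha : 0 ≤ a) (hab : a ≤ b) {ν : ℝ}
    (hν : ν ∈ Ioo (0:ℝ) 1) :
    cfc (fun x : ℝ => x ^ ν) a ≤ cfc (fun x : ℝ => x ^ ν) b := by
  have hb : 0 ≤ b := ha.trans hab
  have hsa : IsSelfAdjoint a := .of_nonneg ha
  have hsb : IsSelfAdjoint b := .of_nonneg hb
  refine le_of_phi_le (cfc_predicate _ a) (cfc_predicate _ b) fun v => ?_
  have h1 := congrArg (phi v) (op_rep ha hν)
  have h2 := congrArg (phi v) (op_rep hb hν)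
  rw [_root_.map_smul, ← ContinuousLinearMap.integral_comp_comm _ (integrand_integrable ha hν)] at h1
  rw [_root_.map_smul, ← ContinuousLinearMap.integral_comp_comm _ (integrand_integrable hb hν)] at h2
  have hint : ∫ t : (Ioi (0:ℝ)),
        phi v (cfc (fun x : ℝ => (t:ℝ) ^ (ν - 1) * (x / (x + (t:ℝ)))) a)
      ≤ ∫ t : (Ioi (0:ℝ)),
        phi v (cfc (fun x : ℝ => (t:ℝ) ^ (ν - 1) * (x / (x + (t:ℝ)))) b) := by
    refine integral_mono ((phi v).integrable_comp (integrand_integrable ha hν))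
      ((phi v).integrable_comp (integrand_integrable hb hν)) fun t => ?_
    exact phi_mono (integrand_mono ha hab t.2 (Real.rpow_nonneg (le_of_lt t.2) _)) v
  have hle : heinzI ν • phi v (cfc (fun x : ℝ => x ^ ν) a)
      ≤ heinzI ν • phi v (cfc (fun x : ℝ => x ^ ν) b) := by
    rw [h1, h2]; exact hint
  have hI := heinzI_pos hν
  rw [smul_eq_mul, smul_eq_mul] at hle
  exact le_of_mul_le_mul_left hle hI

end HeinzAux
end op

open HeinzAux in
theorem heinz_inequality'
    {H : Type*} [NormedAddCommGroup H] [InnerProductSpace ℂ H] [CompleteSpace H]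
    (A B : H →L[ℂ] H) (hA : A.IsPositive) (hB : B.IsPositive)
    (hAB : ∀ h : H, ‖B h‖ ≤ ‖A h‖) :
    ∀ ν ∈ Set.Icc (0 : ℝ) 1, ∀ h : H, ‖cfc (fun x : ℝ => x ^ ν) B h‖
      ≤ ‖cfc (fun x : ℝ => x ^ ν) A h‖ := by
  have hsA : IsSelfAdjoint A := hA.isSelfAdjoint
  have hsB : IsSelfAdjoint B := hB.isSelfAdjoint
  rintro ν ⟨hν0, hν1⟩ h
  rcases subsingleton_or_nontrivial H with hH | hH
  · rw [Subsingleton.elim (cfc (fun x : ℝ => x ^ ν) B h) (cfc (fun x : ℝ => x ^ ν) A h)]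
  rcases eq_or_lt_of_le hν0 with rfl | hν0'
  · have e : ∀ (T : H →L[ℂ] H), IsSelfAdjoint T →
        cfc (fun x : ℝ => x ^ (0:ℝ)) T = 1 := by
      intro T hT
      calc cfc (fun x : ℝ => x ^ (0:ℝ)) T = cfc (fun _ : ℝ => (1:ℝ)) T :=
            cfc_congr fun x _ => Real.rpow_zero x
        _ = 1 := by rw [cfc_const 1 T hT, map_one]
    rw [e B hsB, e A hsA]
  rcases eq_or_lt_of_le hν1 with rfl | hν1'
  · have e : ∀ (T : H →L[ℂ] H), IsSelfAdjoint T →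
        cfc (fun x : ℝ => x ^ (1:ℝ)) T = T := by
      intro T hT
      calc cfc (fun x : ℝ => x ^ (1:ℝ)) T = cfc (fun x : ℝ => x) T :=
            cfc_congr fun x _ => Real.rpow_one x
        _ = T := cfc_id' ℝ T hT
    rw [e B hsB, e A hsA]
    exact hAB h
  have hν : ν ∈ Set.Ioo (0:ℝ) 1 := ⟨hν0', hν1'⟩
  have h0B : 0 ≤ B := (ContinuousLinearMap.nonneg_iff_isPositive B).2 hB
  have h0A : 0 ≤ A := (ContinuousLinearMap.nonneg_iff_isPositive A).2 hA
  have hsq : ∀ (T : H →L[ℂ] H), IsSelfAdjoint T → ∀ v : H, phi v (T * T) = ‖T v‖^2 := by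
    intro T hT v
    rw [phi_apply]
    have h1 : (T * T) v = T (T v) := rfl
    rw [h1]
    have h2 := (ContinuousLinearMap.isSelfAdjoint_iff_isSymmetric.mp hT) (T v) v
    simp only [ContinuousLinearMap.coe_coe] at h2
    rw [h2, ← inner_self_eq_norm_sq (𝕜 := ℂ)]
  have hBB : 0 ≤ B * B := by
    have := star_mul_self_nonneg B
    rwa [hsB.star_eq] at this
  have hBA : B * B ≤ A * A := by
    refine le_of_phi_le ?_ ?_ fun v => ?_
    · rw [IsSelfAdjoint, star_mul, hsB.star_eq]
    · rw [IsSelfAdjoint, star_mul, hsA.star_eq]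
    · rw [hsq B hsB v, hsq A hsA v]
      exact pow_le_pow_left₀ (norm_nonneg _) (hAB v) 2
  have hcore := heinz_core hBB hBA hν
  have hiden : ∀ (T : H →L[ℂ] H), 0 ≤ T →
      cfc (fun x : ℝ => x ^ ν) (T * T)
        = cfc (fun x : ℝ => x ^ ν) T * cfc (fun x : ℝ => x ^ ν) T := by
    intro T hT
    have hsT : IsSelfAdjoint T := .of_nonneg hT
    have hcν : ∀ s : Set ℝ, ContinuousOn (fun x : ℝ => x ^ ν) s := fun s x _ =>
      ((Real.continuousAt_rpow_const x ν (Or.inr hν.1.le)).continuousWithinAt)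
    have h1 : T * T = cfc (fun x : ℝ => x ^ (2:ℕ)) T := by
      rw [cfc_pow_id T 2, sq]
    rw [h1, ← cfc_comp' (fun x : ℝ => x ^ ν) (fun x : ℝ => x ^ (2:ℕ)) T (hcν _) (by fun_prop)]
    have h2 : cfc (fun x : ℝ => (x ^ (2:ℕ)) ^ ν) T
        = cfc (fun x : ℝ => x ^ ν * x ^ ν) T := by
      apply cfc_congr
      intro x hx
      have hx0 : 0 ≤ x := spec_nonneg hT hx
      beta_reduce
      rcases eq_or_lt_of_le hx0 with rfl | hx0'
      · simp [Real.zero_rpow hν.1.ne']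
      · rw [← Real.rpow_natCast x 2, ← Real.rpow_mul hx0, ← Real.rpow_add hx0']
        norm_num
        ring_nf
    rw [h2, cfc_mul _ _ T (hcν _) (hcν _)]
  rw [hiden B h0B, hiden A h0A] at hcore
  have hsel : IsSelfAdjoint (cfc (fun x : ℝ => x ^ ν) B) := cfc_predicate _ B
  have hsel' : IsSelfAdjoint (cfc (fun x : ℝ => x ^ ν) A) := cfc_predicate _ A
  have hfin : ‖cfc (fun x : ℝ => x ^ ν) B h‖^2 ≤ ‖cfc (fun x : ℝ => x ^ ν) A h‖^2 := by
    rw [← hsq _ hsel h, ← hsq _ hsel' h]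
    exact phi_mono hcore h
  nlinarith [norm_nonneg (cfc (fun x : ℝ => x ^ ν) B h),
    norm_nonneg (cfc (fun x : ℝ => x ^ ν) A h)]

end HeinzDevelopment

/-- Heinz inequality, Lemma B.2.
If `A, B` are bounded self-adjoint positive operators on a complex Hilbert space with
`‖B h‖ ≤ ‖A h‖` for all `h`, then for every `ν ∈ [0, 1]` and every `h`,
`‖B^ν h‖ ≤ ‖A^ν h‖`. -/
theorem heinz_inequality
    {H : Type*} [NormedAddCommGroup H] [InnerProductSpace ℂ H] [CompleteSpace H]
    (A B : H →L[ℂ] H) (hA : A.IsPositive) (hB : B.IsPositive)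
    (hAB : ∀ h : H, ‖B h‖ ≤ ‖A h‖) :
    ∀ ν ∈ Set.Icc (0 : ℝ) 1, ∀ h : H, ‖opPow B ν h‖ ≤ ‖opPow A ν h‖ := by
  exact heinz_inequality' A B hA hB hAB
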